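/- (Elastic pendulum.) On M = ℝ²_{(p,q)} × ℝ²_{(y,x)}, let Ω > 0 and γ ∈ ℝ, and let H(p,q,y,x) := (1/2)(p² + q²) + (1/2)(y² + Ω²x² + γq²x). The perturbed Hamiltonian vector field is X_H^ε = X_H^{(0)} + εX_H^{(1)} with X_H^{(0)} = −(Ω²x + (1/2)γq²)∂/∂y + y∂/∂x and X_H^{(1)} = −(1+γx)q∂/∂p + p∂/∂q. Define J := (Ω/2)(x + γq²/(2Ω²))² + y²/(2Ω) and F_ε := J + ε(γ/Ω³)pqy + ε²(γ/(4Ω³))[ γq²(x + γq²/(2Ω²))(x − 3γq²/(2Ω²)) + 4(q² − p²)(x + γq²/(2Ω²)) − (γ/Ω²)q²y² ]. Then F_ε is an approximate first integral of order 2 of X_H^ε: for every (p,q,y,x) ∈ ℝ⁴, (L_{X_H^ε}F_ε)(p,q,y,x) = O(ε³) as ε → 0; equivalently, the coefficients of ε⁰, ε¹ and ε² in the polynomial ε ↦ D(F_ε)(X_H^{(0)} + εX_H^{(1)}) vanish identically on ℝ⁴. -/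

import Mathlib

open Real Asymptotics

noncomputable section

/-- Phase space of the elastic pendulum: `(p, q, y, x) ∈ ℝ⁴`, slow variables
`(p,q)`, fast variables `(y,x)`. -/
abbrev EP := ℝ × ℝ × ℝ × ℝ

/-- The adiabatic invariant `J = (Ω/2)(x + γq²/(2Ω²))² + y²/(2Ω)`. -/
def Jep (Ω γ : ℝ) (m : EP) : ℝ :=
  Ω / 2 * (m.2.2.2 + γ * m.2.1 ^ 2 / (2 * Ω ^ 2)) ^ 2 + m.2.2.1 ^ 2 / (2 * Ω)

/-- The unperturbed (fast) Hamiltonian vector field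
`X_H^{(0)} = -(Ω²x + (1/2)γq²)∂/∂y + y∂/∂x`. -/
def X0ep (Ω γ : ℝ) (m : EP) : EP :=
  (0, 0, -(Ω ^ 2 * m.2.2.2 + (1 / 2) * γ * m.2.1 ^ 2), m.2.2.1)

/-- The perturbation (slow) Hamiltonian vector field
`X_H^{(1)} = -(1+γx)q∂/∂p + p∂/∂q`. -/
def X1ep (Ω γ : ℝ) (m : EP) : EP :=
  (-((1 + γ * m.2.2.2) * m.2.1), m.1, 0, 0)

/-- The approximate first integral of second order of the elastic pendulum. -/
def Fep (Ω γ : ℝ) (ε : ℝ) (m : EP) : ℝ :=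
  Jep Ω γ m + ε * (γ / Ω ^ 3) * m.1 * m.2.1 * m.2.2.1 +
    ε ^ 2 * (γ / (4 * Ω ^ 3)) *
      (γ * m.2.1 ^ 2 * (m.2.2.2 + γ * m.2.1 ^ 2 / (2 * Ω ^ 2)) *
          (m.2.2.2 - 3 * γ * m.2.1 ^ 2 / (2 * Ω ^ 2)) +
        4 * (m.2.1 ^ 2 - m.1 ^ 2) * (m.2.2.2 + γ * m.2.1 ^ 2 / (2 * Ω ^ 2)) -
        (γ / Ω ^ 2) * m.2.1 ^ 2 * m.2.2.1 ^ 2)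

set_option maxHeartbeats 2000000

/-- Elastic pendulum: `F_ε` is an approximate first integral of
order 2 of `X_H^ε = X_H^{(0)} + εX_H^{(1)}`: at every point,
`L_{X_H^ε}F_ε = O(ε³)` as `ε → 0`. -/
theorem stmt17 (Ω γ : ℝ) (hΩ : 0 < Ω) :
    ∀ m : EP,
      (fun ε : ℝ => fderiv ℝ (Fep Ω γ ε) m (X0ep Ω γ m + ε • X1ep Ω γ m))
        =O[nhds 0] fun ε : ℝ => ε ^ 3 := by
  rintro ⟨p, q, y, x⟩
  obtain ⟨C, hC⟩ : ∃ C : ℝ, C = 4 * γ * p * q * x / Ω ^ 3 + (5/2) * γ^2 * p * q * x^2 / Ω ^ 3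
      - (1/2) * γ^2 * p * q * y^2 / Ω ^ 5 + 3 * γ^2 * p * q^3 / Ω ^ 5
      - (9/8) * γ^4 * p * q^5 / Ω ^ 7 - γ^2 * p^3 * q / Ω ^ 5 := ⟨_, rfl⟩
  have key : ∀ ε : ℝ,
      fderiv ℝ (Fep Ω γ ε) (p, q, y, x)
        (X0ep Ω γ (p, q, y, x) + ε • X1ep Ω γ (p, q, y, x)) = C * ε ^ 3 := by
    intro ε
    have hd : DifferentiableAt ℝ (Fep Ω γ ε) (p, q, y, x) := by
      unfold Fep Jep; fun_prop
    rw [← hd.lineDeriv_eq_fderiv]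
    rw [lineDeriv]
    simp only [X0ep, X1ep, Fep, Jep, Prod.smul_mk, Prod.mk_add_mk, smul_eq_mul,
      Prod.fst, Prod.snd, mul_zero, add_zero, zero_add]
    simp (disch := fun_prop) only [deriv_fun_add, deriv_fun_sub, deriv_fun_mul, deriv_fun_pow,
      deriv_div_const, deriv_id'', deriv_const', deriv_mul_const_field,
      deriv_const_mul_field, deriv_neg]
    norm_num
    have hne : Ω ≠ 0 := hΩ.ne'
    rw [hC]
    field_simp
    ring
  have heq : (fun ε : ℝ => fderiv ℝ (Fep Ω γ ε) (p,q,y,x)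
      (X0ep Ω γ (p,q,y,x) + ε • X1ep Ω γ (p,q,y,x))) = fun ε => C * ε ^ 3 :=
    funext key
  rw [heq]
  exact (isBigO_refl (fun ε : ℝ => ε ^ 3) (nhds 0)).const_mul_left C
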